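/- Let Q ⊆ ℝ^m be a cube and G : Q → ℝ^m a Lipschitz function, strongly differentiable at u ∈ int Q, and define the cube-function Φ(I) := V(G(I)) on subcubes I of Q. Then Φ is strongly differentiable at u with Φ'(u) = |det J_G(u)|; i.e., for every ω > 0 there is δ > 0 such that |V(G(I))/V(I) − |det J_G(u)|| < ω for every cube I ⊆ B(u,δ). -/
import Mathlib


open Set Metric MeasureTheory
open scoped NNReal ENNReal

/-- `f` is strongly (strictly) differentiable at `u`, an interior point of `s`,
with derivative `A`. -/
def HasStrongDerivAt {m n : ℕ} (f : (Fin m → ℝ) → (Fin n → ℝ))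
    (A : (Fin m → ℝ) →L[ℝ] (Fin n → ℝ)) (s : Set (Fin m → ℝ)) (u : Fin m → ℝ) : Prop :=
  ∀ ε > (0 : ℝ), ∃ δ > (0 : ℝ), ball u δ ⊆ s ∧
    ∀ x ∈ ball u δ, ∀ y ∈ ball u δ, ‖f x - f y - A (x - y)‖ ≤ ε * ‖x - y‖

/-- The (outer) Jordan content of a bounded set: the Lebesgue measure of its closure. -/
noncomputable def jContentOuter {m : ℕ} (X : Set (Fin m → ℝ)) : ℝ :=
  (volume (closure X)).toReal

/-- The cube-function `I ↦ V(G(I))` is strongly differentiable, with derivative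
`|det J_G(u)|`, at any point `u` of strong differentiability of a Lipschitz map `G` in the
interior of the cube `Q = closedBall q R` (sup-norm balls are cubes; a subcube of radius
`r` has volume `(2r)^m`). -/
theorem volume_image_cube_strong_deriv {m : ℕ} (q : Fin m → ℝ) (R : ℝ) (hR : 0 < R)
    (G : (Fin m → ℝ) → (Fin m → ℝ)) (Lip : NNReal)
    (hG : LipschitzOnWith Lip G (closedBall q R))
    (u : Fin m → ℝ) (hu : u ∈ ball q R)
    (A : (Fin m → ℝ) →L[ℝ] (Fin m → ℝ))
    (hA : HasStrongDerivAt G A (closedBall q R) u) :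
    ∀ ω > (0 : ℝ), ∃ δ > (0 : ℝ), ball u δ ⊆ closedBall q R ∧
      ∀ (c : Fin m → ℝ) (r : ℝ), 0 < r → closedBall c r ⊆ ball u δ →
        |jContentOuter (G '' closedBall c r) / (2 * r) ^ m -
          abs (LinearMap.det (A : (Fin m → ℝ) →ₗ[ℝ] (Fin m → ℝ)))| < ω := by
  intro ω hω
  set d : ℝ := |LinearMap.det (A : (Fin m → ℝ) →ₗ[ℝ] (Fin m → ℝ))| with hd_def
  have hd : 0 ≤ d := abs_nonneg _
  have hdet : ENNReal.ofReal |ContinuousLinearMap.det A| = ((Real.toNNReal d : ℝ≥0) : ℝ≥0∞) :=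
    rfl
  -- the upper estimate, eventually in δ
  have hm₂ : ENNReal.ofReal |ContinuousLinearMap.det A|
      < ((Real.toNNReal (d + ω / 2) : ℝ≥0) : ℝ≥0∞) := by
    rw [hdet, ENNReal.coe_lt_coe, Real.toNNReal_lt_toNNReal_iff (by linarith)]
    linarith
  have h₂ := MeasureTheory.addHaar_image_le_mul_of_det_lt (μ := volume) A hm₂
  -- the lower estimate, eventually in δ
  have h₁ : ∀ᶠ δ in nhdsWithin (0 : ℝ≥0) (Ioi 0),
      ∀ (s : Set (Fin m → ℝ)) (f : (Fin m → ℝ) → (Fin m → ℝ)),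
        ApproximatesLinearOn f A s δ →
          ((Real.toNNReal (d - ω / 2) : ℝ≥0) : ℝ≥0∞) * volume s ≤ volume (f '' s) := by
    by_cases hd0 : d = 0
    · refine Filter.Eventually.of_forall fun δ' s f _ => ?_
      rw [Real.toNNReal_of_nonpos (by linarith)]
      simp
    · refine MeasureTheory.mul_le_addHaar_image_of_lt_det (μ := volume) A ?_
      rw [hdet, ENNReal.coe_lt_coe,
        Real.toNNReal_lt_toNNReal_iff (lt_of_le_of_ne hd (Ne.symm hd0))]
      linarith
  obtain ⟨δ', ⟨H2, H1⟩, δ'pos⟩ := ((h₂.and h₁).and self_mem_nhdsWithin).exists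
  have hδ'ℝ : (0 : ℝ) < (δ' : ℝ) := by exact_mod_cast (δ'pos : (0 : ℝ≥0) < δ')
  obtain ⟨δ₀, hδ₀pos, hball, hkey⟩ := hA (δ' : ℝ) hδ'ℝ
  refine ⟨δ₀, hδ₀pos, hball, ?_⟩
  intro c r hr hIQ
  have happrox : ApproximatesLinearOn G A (closedBall c r) δ' :=
    fun x hx y hy => hkey x (hIQ hx) y (hIQ hy)
  have hsub : closedBall c r ⊆ closedBall q R := hIQ.trans hball
  have hcomp : IsCompact (G '' closedBall c r) :=
    (isCompact_closedBall c r).image_of_continuousOn (hG.continuousOn.mono hsub)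
  have hcl : closure (G '' closedBall c r) = G '' closedBall c r := hcomp.isClosed.closure_eq
  have hvol : volume (closedBall c r) = ENNReal.ofReal ((2 * r) ^ m) := by
    rw [Real.volume_pi_closedBall c hr.le, Fintype.card_fin]
  have hvpos : (0 : ℝ) < (2 * r) ^ m := by positivity
  have hJ : jContentOuter (G '' closedBall c r) = (volume (G '' closedBall c r)).toReal := by
    rw [jContentOuter, hcl]
  -- upper bound
  have upper : jContentOuter (G '' closedBall c r) ≤ (d + ω / 2) * (2 * r) ^ m := by
    have h := H2 _ _ happrox
    rw [hvol] at h
    rw [hJ]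
    calc (volume (G '' closedBall c r)).toReal
        ≤ (((Real.toNNReal (d + ω / 2) : ℝ≥0) : ℝ≥0∞) * ENNReal.ofReal ((2 * r) ^ m)).toReal :=
          ENNReal.toReal_mono (by finiteness) h
      _ = (d + ω / 2) * (2 * r) ^ m := by
          rw [ENNReal.toReal_mul, ENNReal.coe_toReal, Real.coe_toNNReal _ (by linarith),
            ENNReal.toReal_ofReal hvpos.le]
  -- lower bound
  have lower : (max (d - ω / 2) 0) * (2 * r) ^ m ≤ jContentOuter (G '' closedBall c r) := by
    have h := H1 _ _ happrox
    rw [hvol] at h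
    rw [hJ]
    calc (max (d - ω / 2) 0) * (2 * r) ^ m
        = (((Real.toNNReal (d - ω / 2) : ℝ≥0) : ℝ≥0∞) * ENNReal.ofReal ((2 * r) ^ m)).toReal := by
          rw [ENNReal.toReal_mul, ENNReal.coe_toReal, Real.coe_toNNReal',
            ENNReal.toReal_ofReal hvpos.le]
      _ ≤ (volume (G '' closedBall c r)).toReal :=
          ENNReal.toReal_mono hcomp.measure_lt_top.ne h
  have hx1 : jContentOuter (G '' closedBall c r) / (2 * r) ^ m ≤ d + ω / 2 :=
    (div_le_iff₀ hvpos).mpr upper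
  have hx2 : max (d - ω / 2) 0 ≤ jContentOuter (G '' closedBall c r) / (2 * r) ^ m :=
    (le_div_iff₀ hvpos).mpr lower
  have hmax : d - ω / 2 ≤ max (d - ω / 2) 0 := le_max_left _ _
  rw [abs_sub_lt_iff]
  constructor <;> linarith
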